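/- Let ψ_1, ψ_2, ψ_3 be real numbers with ψ_1 + ψ_2 + ψ_3 = 0, ψ_1·ψ_2·ψ_3 ≠ 0, and ψ_2 ≠ ψ_3. Then the real quartic polynomial R̃_1(c) = b_4c⁴ + b_3c³ + b_2c² + b_1c + b_0, with b_4 = −9ψ_1²ψ_2ψ_3, b_3 = −4ψ_1(2ψ_2+ψ_3)(ψ_2+2ψ_3), b_2 = 6ψ_1²(ψ_2ψ_3−2), b_1 = 6ψ_1(2ψ_2ψ_3−1), b_0 = −(ψ_1²ψ_2ψ_3 − 4ψ_2ψ_3 + 1), has exactly two real roots; that is, the set {c ∈ ℝ : R̃_1(c) = 0} has exactly two elements. -/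

import Mathlib

set_option maxHeartbeats 1000000

open Polynomial Complex

private lemma quartic_aux_selfconj (a D : ℝ) (v : ℂ) (hD : D < 0)
    (hDC : (D : ℂ) = (a : ℂ) ^ 6 * v ^ 2) (hv : (starRingEnd ℂ) v = v) : False := by
  obtain ⟨r, rfl⟩ := Complex.conj_eq_iff_real.mp hv
  have h1 : D = a ^ 6 * r ^ 2 := by
    have : (D : ℂ) = ((a ^ 6 * r ^ 2 : ℝ) : ℂ) := by rw [hDC]; push_cast; ring
    exact_mod_cast this
  have h2 : (0:ℝ) ≤ a ^ 6 * r ^ 2 := by positivity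
  linarith

private lemma quartic_aux_disc (b4 b3 b2 b1 b0 : ℝ) (z1 z2 z3 z4 : ℂ)
    (hv0 : (b0:ℂ) = (b4:ℂ) * (z1*z2*z3*z4))
    (hv1 : (b1:ℂ) = -(b4:ℂ) * (z1*z2*z3 + z1*z2*z4 + z1*z3*z4 + z2*z3*z4))
    (hv2 : (b2:ℂ) = (b4:ℂ) * (z1*z2 + z1*z3 + z1*z4 + z2*z3 + z2*z4 + z3*z4))
    (hv3 : (b3:ℂ) = -(b4:ℂ) * (z1 + z2 + z3 + z4)) :
    (((b3^2*b2^2*b1^2 - 4*b3^3*b1^3 - 4*b4*b2^3*b1^2 + 18*b4*b3*b2*b1^3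
      - 27*b4^2*b1^4 - 4*b3^2*b2^3*b0 + 18*b3^3*b2*b1*b0 + 16*b4*b2^4*b0
      - 80*b4*b3*b2^2*b1*b0 - 6*b4*b3^2*b1^2*b0 + 144*b4^2*b2*b1^2*b0
      - 27*b3^4*b0^2 + 144*b4*b3^2*b2*b0^2 - 128*b4^2*b2^2*b0^2
      - 192*b4^2*b3*b1*b0^2 + 256*b4^3*b0^3 : ℝ)) : ℂ)
      = (b4:ℂ)^6 * ((z1-z2)*(z1-z3)*(z1-z4)*(z2-z3)*(z2-z4)*(z3-z4))^2 := by
  push_cast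
  rw [hv3, hv2, hv1, hv0]
  ring

private lemma quartic_disc_neg_ncard (b4 b3 b2 b1 b0 : ℝ) (hb4 : b4 ≠ 0)
    (hDneg : b3^2*b2^2*b1^2 - 4*b3^3*b1^3 - 4*b4*b2^3*b1^2 + 18*b4*b3*b2*b1^3
      - 27*b4^2*b1^4 - 4*b3^2*b2^3*b0 + 18*b3^3*b2*b1*b0 + 16*b4*b2^4*b0
      - 80*b4*b3*b2^2*b1*b0 - 6*b4*b3^2*b1^2*b0 + 144*b4^2*b2*b1^2*b0
      - 27*b3^4*b0^2 + 144*b4*b3^2*b2*b0^2 - 128*b4^2*b2^2*b0^2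
      - 192*b4^2*b3*b1*b0^2 + 256*b4^3*b0^3 < 0) :
    {c : ℝ | b4 * c ^ 4 + b3 * c ^ 3 + b2 * c ^ 2 + b1 * c + b0 = 0}.ncard = 2 := by
  set DD : ℝ := b3^2*b2^2*b1^2 - 4*b3^3*b1^3 - 4*b4*b2^3*b1^2 + 18*b4*b3*b2*b1^3
      - 27*b4^2*b1^4 - 4*b3^2*b2^3*b0 + 18*b3^3*b2*b1*b0 + 16*b4*b2^4*b0
      - 80*b4*b3*b2^2*b1*b0 - 6*b4*b3^2*b1^2*b0 + 144*b4^2*b2*b1^2*b0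
      - 27*b3^4*b0^2 + 144*b4*b3^2*b2*b0^2 - 128*b4^2*b2^2*b0^2
      - 192*b4^2*b3*b1*b0^2 + 256*b4^3*b0^3 with hDD
  have hD : DD < 0 := hDneg
  have hb4C : (b4:ℂ) ≠ 0 := Complex.ofReal_ne_zero.mpr hb4
  -- factor the quartic over ℂ
  set p : ℂ[X] := C (b4:ℂ)*X^4 + C (b3:ℂ)*X^3 + C (b2:ℂ)*X^2 + C (b1:ℂ)*X + C (b0:ℂ) with hp
  have hdeg : p.natDegree = 4 := by rw [hp]; compute_degree!
  have hsplits : p.Splits := IsAlgClosed.splits p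
  have hcard : p.roots.card = 4 := by
    rw [← hdeg]; exact (Polynomial.splits_iff_card_roots).mp hsplits
  have hpos : 0 < p.roots.card := by omega
  obtain ⟨z1, hz1⟩ := Multiset.card_pos_iff_exists_mem.mp hpos
  obtain ⟨t, ht⟩ := Multiset.exists_cons_of_mem hz1
  have ht3 : t.card = 3 := by
    have := hcard; rw [ht] at this; simpa using this
  obtain ⟨z2, z3, z4, rfl⟩ := Multiset.card_eq_three.mp ht3
  have hlead : p.leadingCoeff = (b4:ℂ) := by
    rw [Polynomial.leadingCoeff, hdeg, hp]
    simp [coeff_C]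
  have hfactor := hsplits.eq_prod_roots
  rw [hlead, ht] at hfactor
  have hfac : ∀ z : ℂ, (b4:ℂ)*z^4 + (b3:ℂ)*z^3 + (b2:ℂ)*z^2 + (b1:ℂ)*z + (b0:ℂ)
      = (b4:ℂ) * ((z - z1)*(z - z2)*(z - z3)*(z - z4)) := by
    intro z
    have hev := congrArg (Polynomial.eval z) hfactor
    rw [hp] at hev
    simp only [Multiset.map_cons, Multiset.prod_cons, Multiset.insert_eq_cons,
      Multiset.map_singleton, Multiset.prod_singleton, eval_add, eval_mul, eval_pow,
      eval_C, eval_X, eval_sub] at hev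
    rw [hev]; ring
  -- Vieta
  have h0 := hfac 0
  have h1 := hfac 1
  have hm1 := hfac (-1)
  have h2 := hfac 2
  have hm2 := hfac (-2)
  have hv0 : (b0:ℂ) = (b4:ℂ) * (z1*z2*z3*z4) := by linear_combination h0
  have hv1 : (b1:ℂ) = -(b4:ℂ) * (z1*z2*z3 + z1*z2*z4 + z1*z3*z4 + z2*z3*z4) := by
    linear_combination (2/3 : ℂ) * h1 - (2/3 : ℂ) * hm1 - (1/12 : ℂ) * h2 + (1/12 : ℂ) * hm2
  have hv2 : (b2:ℂ) = (b4:ℂ) * (z1*z2 + z1*z3 + z1*z4 + z2*z3 + z2*z4 + z3*z4) := by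
    linear_combination (2/3 : ℂ) * h1 + (2/3 : ℂ) * hm1 - (1/24 : ℂ) * h2 - (1/24 : ℂ) * hm2
      - (5/4 : ℂ) * h0
  have hv3 : (b3:ℂ) = -(b4:ℂ) * (z1 + z2 + z3 + z4) := by
    linear_combination (1/12 : ℂ) * h2 - (1/6 : ℂ) * h1 + (1/6 : ℂ) * hm1 - (1/12 : ℂ) * hm2
  have hDC : ((DD:ℝ):ℂ)
      = (b4:ℂ)^6 * ((z1-z2)*(z1-z3)*(z1-z4)*(z2-z3)*(z2-z4)*(z3-z4))^2 := by
    rw [hDD]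
    exact quartic_aux_disc b4 b3 b2 b1 b0 z1 z2 z3 z4 hv0 hv1 hv2 hv3
  -- distinctness of the four roots
  have hD0 : DD ≠ 0 := ne_of_lt hD
  have d12 : z1 ≠ z2 := by intro hq; rw [hq] at hDC; simp at hDC; exact hD0 hDC
  have d13 : z1 ≠ z3 := by intro hq; rw [hq] at hDC; simp at hDC; exact hD0 hDC
  have d14 : z1 ≠ z4 := by intro hq; rw [hq] at hDC; simp at hDC; exact hD0 hDC
  have d23 : z2 ≠ z3 := by intro hq; rw [hq] at hDC; simp at hDC; exact hD0 hDC
  have d24 : z2 ≠ z4 := by intro hq; rw [hq] at hDC; simp at hDC; exact hD0 hDC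
  have d34 : z3 ≠ z4 := by intro hq; rw [hq] at hDC; simp at hDC; exact hD0 hDC
  -- root characterization
  have hroot : ∀ z : ℂ, ((b4:ℂ)*z^4 + (b3:ℂ)*z^3 + (b2:ℂ)*z^2 + (b1:ℂ)*z + (b0:ℂ) = 0)
      ↔ (z = z1 ∨ z = z2 ∨ z = z3 ∨ z = z4) := by
    intro z
    rw [hfac z]
    simp only [mul_eq_zero, sub_eq_zero, Complex.ofReal_eq_zero]
    constructor
    · intro h; rcases h with h | h
      · exact absurd h hb4
      · tauto
    · intro h; tauto
  have hconj : ∀ z : ℂ, (z = z1 ∨ z = z2 ∨ z = z3 ∨ z = z4) →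
      ((starRingEnd ℂ) z = z1 ∨ (starRingEnd ℂ) z = z2 ∨ (starRingEnd ℂ) z = z3
        ∨ (starRingEnd ℂ) z = z4) := by
    intro z hz
    rw [← hroot] at hz ⊢
    have hcc : (b4:ℂ)*((starRingEnd ℂ) z)^4 + (b3:ℂ)*((starRingEnd ℂ) z)^3
        + (b2:ℂ)*((starRingEnd ℂ) z)^2 + (b1:ℂ)*((starRingEnd ℂ) z) + (b0:ℂ)
        = (starRingEnd ℂ) ((b4:ℂ)*z^4 + (b3:ℂ)*z^3 + (b2:ℂ)*z^2 + (b1:ℂ)*z + (b0:ℂ)) := by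
      simp only [map_add, map_mul, map_pow, Complex.conj_ofReal]
    rw [hcc, hz, map_zero]
  have hSiff : ∀ c : ℝ, (b4 * c ^ 4 + b3 * c ^ 3 + b2 * c ^ 2 + b1 * c + b0 = 0)
      ↔ (((c:ℂ) = z1 ∨ (c:ℂ) = z2 ∨ (c:ℂ) = z3 ∨ (c:ℂ) = z4)) := by
    intro c
    rw [← hroot (c:ℂ)]
    constructor
    · intro h; exact_mod_cast congrArg (fun x : ℝ => (x:ℂ)) h
    · intro h; exact_mod_cast h
  by_cases e1 : z1.im = 0
  ·
    by_cases e2 : z2.im = 0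
    ·
      by_cases e3 : z3.im = 0
      ·
        by_cases e4 : z4.im = 0
        ·
          have c1 : (starRingEnd ℂ) z1 = z1 := Complex.conj_eq_iff_im.mpr e1
          have c2 : (starRingEnd ℂ) z2 = z2 := Complex.conj_eq_iff_im.mpr e2
          have c3 : (starRingEnd ℂ) z3 = z3 := Complex.conj_eq_iff_im.mpr e3
          have c4 : (starRingEnd ℂ) z4 = z4 := Complex.conj_eq_iff_im.mpr e4
          exfalso
          exact quartic_aux_selfconj b4 DD _ hD hDC (by simp only [map_mul, map_sub, c1, c2, c3, c4])
        ·
          exfalso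
          rcases hconj z4 (by tauto) with h|h|h|h
          · exact absurd (by simpa [Complex.conj_im, e1, neg_eq_zero] using congrArg Complex.im h) e4
          · exact absurd (by simpa [Complex.conj_im, e2, neg_eq_zero] using congrArg Complex.im h) e4
          · exact absurd (by simpa [Complex.conj_im, e3, neg_eq_zero] using congrArg Complex.im h) e4
          · exact absurd (Complex.conj_eq_iff_im.mp h) e4
      ·
        by_cases e4 : z4.im = 0
        ·
          exfalso
          rcases hconj z3 (by tauto) with h|h|h|h
          · exact absurd (by simpa [Complex.conj_im, e1, neg_eq_zero] using congrArg Complex.im h) e3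
          · exact absurd (by simpa [Complex.conj_im, e2, neg_eq_zero] using congrArg Complex.im h) e3
          · exact absurd (Complex.conj_eq_iff_im.mp h) e3
          · exact absurd (by simpa [Complex.conj_im, e4, neg_eq_zero] using congrArg Complex.im h) e3
        ·
          have hp : (starRingEnd ℂ) z3 = z4 := by
            rcases hconj z3 (by tauto) with h|h|h|h
            · exact absurd (by simpa [Complex.conj_im, e1, neg_eq_zero] using congrArg Complex.im h) e3
            · exact absurd (by simpa [Complex.conj_im, e2, neg_eq_zero] using congrArg Complex.im h) e3
            · exact absurd (Complex.conj_eq_iff_im.mp h) e3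
            · exact h
          have hx1 : ((z1.re : ℝ) : ℂ) = z1 := by apply Complex.ext <;> simp [e1]
          have hx2 : ((z2.re : ℝ) : ℂ) = z2 := by apply Complex.ext <;> simp [e2]
          have hxy : z1.re ≠ z2.re := fun hh => d12 (by rw [← hx1, ← hx2, hh])
          have hset : {c : ℝ | b4 * c ^ 4 + b3 * c ^ 3 + b2 * c ^ 2 + b1 * c + b0 = 0} = {z1.re, z2.re} := by
            ext c
            simp only [Set.mem_setOf_eq, Set.mem_insert_iff, Set.mem_singleton_iff]
            rw [hSiff c]
            constructor
            · rintro (h|h|h|h)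
              · left; exact_mod_cast h.trans hx1.symm
              · right; exact_mod_cast h.trans hx2.symm
              · exact absurd (by simpa using (congrArg Complex.im h).symm) e3
              · exact absurd (by simpa using (congrArg Complex.im h).symm) e4
            · rintro (h|h)
              · subst h; exact Or.inl hx1
              · subst h; exact Or.inr (Or.inl hx2)
          rw [hset]
          exact Set.ncard_pair hxy
    ·
      by_cases e3 : z3.im = 0
      ·
        by_cases e4 : z4.im = 0
        ·
          exfalso
          rcases hconj z2 (by tauto) with h|h|h|h
          · exact absurd (by simpa [Complex.conj_im, e1, neg_eq_zero] using congrArg Complex.im h) e2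
          · exact absurd (Complex.conj_eq_iff_im.mp h) e2
          · exact absurd (by simpa [Complex.conj_im, e3, neg_eq_zero] using congrArg Complex.im h) e2
          · exact absurd (by simpa [Complex.conj_im, e4, neg_eq_zero] using congrArg Complex.im h) e2
        ·
          have hp : (starRingEnd ℂ) z2 = z4 := by
            rcases hconj z2 (by tauto) with h|h|h|h
            · exact absurd (by simpa [Complex.conj_im, e1, neg_eq_zero] using congrArg Complex.im h) e2
            · exact absurd (Complex.conj_eq_iff_im.mp h) e2
            · exact absurd (by simpa [Complex.conj_im, e3, neg_eq_zero] using congrArg Complex.im h) e2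
            · exact h
          have hx1 : ((z1.re : ℝ) : ℂ) = z1 := by apply Complex.ext <;> simp [e1]
          have hx3 : ((z3.re : ℝ) : ℂ) = z3 := by apply Complex.ext <;> simp [e3]
          have hxy : z1.re ≠ z3.re := fun hh => d13 (by rw [← hx1, ← hx3, hh])
          have hset : {c : ℝ | b4 * c ^ 4 + b3 * c ^ 3 + b2 * c ^ 2 + b1 * c + b0 = 0} = {z1.re, z3.re} := by
            ext c
            simp only [Set.mem_setOf_eq, Set.mem_insert_iff, Set.mem_singleton_iff]
            rw [hSiff c]
            constructor
            · rintro (h|h|h|h)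
              · left; exact_mod_cast h.trans hx1.symm
              · exact absurd (by simpa using (congrArg Complex.im h).symm) e2
              · right; exact_mod_cast h.trans hx3.symm
              · exact absurd (by simpa using (congrArg Complex.im h).symm) e4
            · rintro (h|h)
              · subst h; exact Or.inl hx1
              · subst h; exact Or.inr (Or.inr (Or.inl hx3))
          rw [hset]
          exact Set.ncard_pair hxy
      ·
        by_cases e4 : z4.im = 0
        ·
          have hp : (starRingEnd ℂ) z2 = z3 := by
            rcases hconj z2 (by tauto) with h|h|h|h
            · exact absurd (by simpa [Complex.conj_im, e1, neg_eq_zero] using congrArg Complex.im h) e2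
            · exact absurd (Complex.conj_eq_iff_im.mp h) e2
            · exact h
            · exact absurd (by simpa [Complex.conj_im, e4, neg_eq_zero] using congrArg Complex.im h) e2
          have hx1 : ((z1.re : ℝ) : ℂ) = z1 := by apply Complex.ext <;> simp [e1]
          have hx4 : ((z4.re : ℝ) : ℂ) = z4 := by apply Complex.ext <;> simp [e4]
          have hxy : z1.re ≠ z4.re := fun hh => d14 (by rw [← hx1, ← hx4, hh])
          have hset : {c : ℝ | b4 * c ^ 4 + b3 * c ^ 3 + b2 * c ^ 2 + b1 * c + b0 = 0} = {z1.re, z4.re} := by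
            ext c
            simp only [Set.mem_setOf_eq, Set.mem_insert_iff, Set.mem_singleton_iff]
            rw [hSiff c]
            constructor
            · rintro (h|h|h|h)
              · left; exact_mod_cast h.trans hx1.symm
              · exact absurd (by simpa using (congrArg Complex.im h).symm) e2
              · exact absurd (by simpa using (congrArg Complex.im h).symm) e3
              · right; exact_mod_cast h.trans hx4.symm
            · rintro (h|h)
              · subst h; exact Or.inl hx1
              · subst h; exact Or.inr (Or.inr (Or.inr hx4))
          rw [hset]
          exact Set.ncard_pair hxy
        ·
          exfalso
          rcases hconj z2 (by tauto) with h|h|h|h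
          · exact absurd (by simpa [Complex.conj_im, e1, neg_eq_zero] using congrArg Complex.im h) e2
          · exact absurd (Complex.conj_eq_iff_im.mp h) e2
          · rcases hconj z4 (by tauto) with hh|hh|hh|hh
            · exact absurd (by simpa [Complex.conj_im, e1, neg_eq_zero] using congrArg Complex.im hh) e4
            · have hq := congrArg (starRingEnd ℂ) hh
              rw [Complex.conj_conj, h] at hq
              exact d34 hq.symm
            · have hq := congrArg (starRingEnd ℂ) (hh.trans h.symm)
              rw [Complex.conj_conj, Complex.conj_conj] at hq
              exact d24 hq.symm
            · exact absurd (Complex.conj_eq_iff_im.mp hh) e4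
          · rcases hconj z3 (by tauto) with hh|hh|hh|hh
            · exact absurd (by simpa [Complex.conj_im, e1, neg_eq_zero] using congrArg Complex.im hh) e3
            · have hq := congrArg (starRingEnd ℂ) hh
              rw [Complex.conj_conj, h] at hq
              exact d34 hq
            · exact absurd (Complex.conj_eq_iff_im.mp hh) e3
            · have hq := congrArg (starRingEnd ℂ) (hh.trans h.symm)
              rw [Complex.conj_conj, Complex.conj_conj] at hq
              exact d23 hq.symm
  ·
    by_cases e2 : z2.im = 0
    ·
      by_cases e3 : z3.im = 0
      ·
        by_cases e4 : z4.im = 0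
        ·
          exfalso
          rcases hconj z1 (by tauto) with h|h|h|h
          · exact absurd (Complex.conj_eq_iff_im.mp h) e1
          · exact absurd (by simpa [Complex.conj_im, e2, neg_eq_zero] using congrArg Complex.im h) e1
          · exact absurd (by simpa [Complex.conj_im, e3, neg_eq_zero] using congrArg Complex.im h) e1
          · exact absurd (by simpa [Complex.conj_im, e4, neg_eq_zero] using congrArg Complex.im h) e1
        ·
          have hp : (starRingEnd ℂ) z1 = z4 := by
            rcases hconj z1 (by tauto) with h|h|h|h
            · exact absurd (Complex.conj_eq_iff_im.mp h) e1
            · exact absurd (by simpa [Complex.conj_im, e2, neg_eq_zero] using congrArg Complex.im h) e1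
            · exact absurd (by simpa [Complex.conj_im, e3, neg_eq_zero] using congrArg Complex.im h) e1
            · exact h
          have hx2 : ((z2.re : ℝ) : ℂ) = z2 := by apply Complex.ext <;> simp [e2]
          have hx3 : ((z3.re : ℝ) : ℂ) = z3 := by apply Complex.ext <;> simp [e3]
          have hxy : z2.re ≠ z3.re := fun hh => d23 (by rw [← hx2, ← hx3, hh])
          have hset : {c : ℝ | b4 * c ^ 4 + b3 * c ^ 3 + b2 * c ^ 2 + b1 * c + b0 = 0} = {z2.re, z3.re} := by
            ext c
            simp only [Set.mem_setOf_eq, Set.mem_insert_iff, Set.mem_singleton_iff]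
            rw [hSiff c]
            constructor
            · rintro (h|h|h|h)
              · exact absurd (by simpa using (congrArg Complex.im h).symm) e1
              · left; exact_mod_cast h.trans hx2.symm
              · right; exact_mod_cast h.trans hx3.symm
              · exact absurd (by simpa using (congrArg Complex.im h).symm) e4
            · rintro (h|h)
              · subst h; exact Or.inr (Or.inl hx2)
              · subst h; exact Or.inr (Or.inr (Or.inl hx3))
          rw [hset]
          exact Set.ncard_pair hxy
      ·
        by_cases e4 : z4.im = 0
        ·
          have hp : (starRingEnd ℂ) z1 = z3 := by
            rcases hconj z1 (by tauto) with h|h|h|h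
            · exact absurd (Complex.conj_eq_iff_im.mp h) e1
            · exact absurd (by simpa [Complex.conj_im, e2, neg_eq_zero] using congrArg Complex.im h) e1
            · exact h
            · exact absurd (by simpa [Complex.conj_im, e4, neg_eq_zero] using congrArg Complex.im h) e1
          have hx2 : ((z2.re : ℝ) : ℂ) = z2 := by apply Complex.ext <;> simp [e2]
          have hx4 : ((z4.re : ℝ) : ℂ) = z4 := by apply Complex.ext <;> simp [e4]
          have hxy : z2.re ≠ z4.re := fun hh => d24 (by rw [← hx2, ← hx4, hh])
          have hset : {c : ℝ | b4 * c ^ 4 + b3 * c ^ 3 + b2 * c ^ 2 + b1 * c + b0 = 0} = {z2.re, z4.re} := by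
            ext c
            simp only [Set.mem_setOf_eq, Set.mem_insert_iff, Set.mem_singleton_iff]
            rw [hSiff c]
            constructor
            · rintro (h|h|h|h)
              · exact absurd (by simpa using (congrArg Complex.im h).symm) e1
              · left; exact_mod_cast h.trans hx2.symm
              · exact absurd (by simpa using (congrArg Complex.im h).symm) e3
              · right; exact_mod_cast h.trans hx4.symm
            · rintro (h|h)
              · subst h; exact Or.inr (Or.inl hx2)
              · subst h; exact Or.inr (Or.inr (Or.inr hx4))
          rw [hset]
          exact Set.ncard_pair hxy
        ·
          exfalso
          rcases hconj z1 (by tauto) with h|h|h|h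
          · exact absurd (Complex.conj_eq_iff_im.mp h) e1
          · exact absurd (by simpa [Complex.conj_im, e2, neg_eq_zero] using congrArg Complex.im h) e1
          · rcases hconj z4 (by tauto) with hh|hh|hh|hh
            · have hq := congrArg (starRingEnd ℂ) hh
              rw [Complex.conj_conj, h] at hq
              exact d34 hq.symm
            · exact absurd (by simpa [Complex.conj_im, e2, neg_eq_zero] using congrArg Complex.im hh) e4
            · have hq := congrArg (starRingEnd ℂ) (hh.trans h.symm)
              rw [Complex.conj_conj, Complex.conj_conj] at hq
              exact d14 hq.symm
            · exact absurd (Complex.conj_eq_iff_im.mp hh) e4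
          · rcases hconj z3 (by tauto) with hh|hh|hh|hh
            · have hq := congrArg (starRingEnd ℂ) hh
              rw [Complex.conj_conj, h] at hq
              exact d34 hq
            · exact absurd (by simpa [Complex.conj_im, e2, neg_eq_zero] using congrArg Complex.im hh) e3
            · exact absurd (Complex.conj_eq_iff_im.mp hh) e3
            · have hq := congrArg (starRingEnd ℂ) (hh.trans h.symm)
              rw [Complex.conj_conj, Complex.conj_conj] at hq
              exact d13 hq.symm
    ·
      by_cases e3 : z3.im = 0
      ·
        by_cases e4 : z4.im = 0
        ·
          have hp : (starRingEnd ℂ) z1 = z2 := by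
            rcases hconj z1 (by tauto) with h|h|h|h
            · exact absurd (Complex.conj_eq_iff_im.mp h) e1
            · exact h
            · exact absurd (by simpa [Complex.conj_im, e3, neg_eq_zero] using congrArg Complex.im h) e1
            · exact absurd (by simpa [Complex.conj_im, e4, neg_eq_zero] using congrArg Complex.im h) e1
          have hx3 : ((z3.re : ℝ) : ℂ) = z3 := by apply Complex.ext <;> simp [e3]
          have hx4 : ((z4.re : ℝ) : ℂ) = z4 := by apply Complex.ext <;> simp [e4]
          have hxy : z3.re ≠ z4.re := fun hh => d34 (by rw [← hx3, ← hx4, hh])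
          have hset : {c : ℝ | b4 * c ^ 4 + b3 * c ^ 3 + b2 * c ^ 2 + b1 * c + b0 = 0} = {z3.re, z4.re} := by
            ext c
            simp only [Set.mem_setOf_eq, Set.mem_insert_iff, Set.mem_singleton_iff]
            rw [hSiff c]
            constructor
            · rintro (h|h|h|h)
              · exact absurd (by simpa using (congrArg Complex.im h).symm) e1
              · exact absurd (by simpa using (congrArg Complex.im h).symm) e2
              · left; exact_mod_cast h.trans hx3.symm
              · right; exact_mod_cast h.trans hx4.symm
            · rintro (h|h)
              · subst h; exact Or.inr (Or.inr (Or.inl hx3))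
              · subst h; exact Or.inr (Or.inr (Or.inr hx4))
          rw [hset]
          exact Set.ncard_pair hxy
        ·
          exfalso
          rcases hconj z1 (by tauto) with h|h|h|h
          · exact absurd (Complex.conj_eq_iff_im.mp h) e1
          · rcases hconj z4 (by tauto) with hh|hh|hh|hh
            · have hq := congrArg (starRingEnd ℂ) hh
              rw [Complex.conj_conj, h] at hq
              exact d24 hq.symm
            · have hq := congrArg (starRingEnd ℂ) (hh.trans h.symm)
              rw [Complex.conj_conj, Complex.conj_conj] at hq
              exact d14 hq.symm
            · exact absurd (by simpa [Complex.conj_im, e3, neg_eq_zero] using congrArg Complex.im hh) e4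
            · exact absurd (Complex.conj_eq_iff_im.mp hh) e4
          · exact absurd (by simpa [Complex.conj_im, e3, neg_eq_zero] using congrArg Complex.im h) e1
          · rcases hconj z2 (by tauto) with hh|hh|hh|hh
            · have hq := congrArg (starRingEnd ℂ) hh
              rw [Complex.conj_conj, h] at hq
              exact d24 hq
            · exact absurd (Complex.conj_eq_iff_im.mp hh) e2
            · exact absurd (by simpa [Complex.conj_im, e3, neg_eq_zero] using congrArg Complex.im hh) e2
            · have hq := congrArg (starRingEnd ℂ) (hh.trans h.symm)
              rw [Complex.conj_conj, Complex.conj_conj] at hq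
              exact d12 hq.symm
      ·
        by_cases e4 : z4.im = 0
        ·
          exfalso
          rcases hconj z1 (by tauto) with h|h|h|h
          · exact absurd (Complex.conj_eq_iff_im.mp h) e1
          · rcases hconj z3 (by tauto) with hh|hh|hh|hh
            · have hq := congrArg (starRingEnd ℂ) hh
              rw [Complex.conj_conj, h] at hq
              exact d23 hq.symm
            · have hq := congrArg (starRingEnd ℂ) (hh.trans h.symm)
              rw [Complex.conj_conj, Complex.conj_conj] at hq
              exact d13 hq.symm
            · exact absurd (Complex.conj_eq_iff_im.mp hh) e3
            · exact absurd (by simpa [Complex.conj_im, e4, neg_eq_zero] using congrArg Complex.im hh) e3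
          · rcases hconj z2 (by tauto) with hh|hh|hh|hh
            · have hq := congrArg (starRingEnd ℂ) hh
              rw [Complex.conj_conj, h] at hq
              exact d23 hq
            · exact absurd (Complex.conj_eq_iff_im.mp hh) e2
            · have hq := congrArg (starRingEnd ℂ) (hh.trans h.symm)
              rw [Complex.conj_conj, Complex.conj_conj] at hq
              exact d12 hq.symm
            · exact absurd (by simpa [Complex.conj_im, e4, neg_eq_zero] using congrArg Complex.im hh) e2
          · exact absurd (by simpa [Complex.conj_im, e4, neg_eq_zero] using congrArg Complex.im h) e1
        ·
          exfalso
          rcases hconj z1 (Or.inl rfl) with h|h|h|h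
          · exact absurd (Complex.conj_eq_iff_im.mp h) e1
          · rcases hconj z3 (by tauto) with hh|hh|hh|hh
            · have hq := congrArg (starRingEnd ℂ) hh
              rw [Complex.conj_conj, h] at hq
              exact d23 hq.symm
            · have hq := congrArg (starRingEnd ℂ) (hh.trans h.symm)
              rw [Complex.conj_conj, Complex.conj_conj] at hq
              exact d13 hq.symm
            · exact absurd (Complex.conj_eq_iff_im.mp hh) e3
            · exact quartic_aux_selfconj b4 DD _ hD hDC (by rw [← h, ← hh]; simp only [map_mul, map_sub, Complex.conj_conj]; ring)
          · rcases hconj z2 (by tauto) with hh|hh|hh|hh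
            · have hq := congrArg (starRingEnd ℂ) hh
              rw [Complex.conj_conj, h] at hq
              exact d23 hq
            · exact absurd (Complex.conj_eq_iff_im.mp hh) e2
            · have hq := congrArg (starRingEnd ℂ) (hh.trans h.symm)
              rw [Complex.conj_conj, Complex.conj_conj] at hq
              exact d12 hq.symm
            · exact quartic_aux_selfconj b4 DD _ hD hDC (by rw [← h, ← hh]; simp only [map_mul, map_sub, Complex.conj_conj]; ring)
          · rcases hconj z2 (by tauto) with hh|hh|hh|hh
            · have hq := congrArg (starRingEnd ℂ) hh
              rw [Complex.conj_conj, h] at hq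
              exact d24 hq
            · exact absurd (Complex.conj_eq_iff_im.mp hh) e2
            · exact quartic_aux_selfconj b4 DD _ hD hDC (by rw [← h, ← hh]; simp only [map_mul, map_sub, Complex.conj_conj]; ring)
            · have hq := congrArg (starRingEnd ℂ) (hh.trans h.symm)
              rw [Complex.conj_conj, Complex.conj_conj] at hq
              exact d12 hq.symm

/-- For real `ψ₁ + ψ₂ + ψ₃ = 0` with `ψ₁ψ₂ψ₃ ≠ 0` and `ψ₂ ≠ ψ₃`,
the Cayley-transformed quartic `R̃₁` has exactly two real roots. -/
theorem transformed_quartic_two_real_roots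
    (ψ1 ψ2 ψ3 : ℝ) (hsum : ψ1 + ψ2 + ψ3 = 0)
    (hne : ψ1 * ψ2 * ψ3 ≠ 0) (h23 : ψ2 ≠ ψ3)
    (b4 b3 b2 b1 b0 : ℝ)
    (hb4 : b4 = -(9 * ψ1 ^ 2 * ψ2 * ψ3))
    (hb3 : b3 = -(4 * ψ1 * (2 * ψ2 + ψ3) * (ψ2 + 2 * ψ3)))
    (hb2 : b2 = 6 * ψ1 ^ 2 * (ψ2 * ψ3 - 2))
    (hb1 : b1 = 6 * ψ1 * (2 * ψ2 * ψ3 - 1))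
    (hb0 : b0 = -(ψ1 ^ 2 * ψ2 * ψ3 - 4 * ψ2 * ψ3 + 1)) :
    Set.ncard {c : ℝ | b4 * c ^ 4 + b3 * c ^ 3 + b2 * c ^ 2 + b1 * c + b0 = 0} = 2 := by
  have h12 := mul_ne_zero_iff.mp hne
  have h1 : ψ1 ≠ 0 := (mul_ne_zero_iff.mp h12.1).1
  have h2 : ψ2 ≠ 0 := (mul_ne_zero_iff.mp h12.1).2
  have h3 : ψ3 ≠ 0 := h12.2
  have hψ3 : ψ3 = -ψ1 - ψ2 := by linarith
  subst hψ3
  have hs : ψ1 + ψ2 ≠ 0 := fun h => h3 (by rw [show -ψ1 - ψ2 = -(ψ1+ψ2) by ring, h, neg_zero])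
  have hb4ne : b4 ≠ 0 := by
    have h9 : (9:ℝ) * ψ1 ^ 2 * ψ2 * (-ψ1 - ψ2) ≠ 0 :=
      mul_ne_zero (mul_ne_zero (mul_ne_zero (by norm_num) (pow_ne_zero 2 h1)) h2) h3
    rw [hb4]
    exact neg_ne_zero.mpr h9
  apply quartic_disc_neg_ncard b4 b3 b2 b1 b0 hb4ne
  set f : ℝ := ψ2 * (-ψ1 - ψ2) with hf
  set g : ℝ := f - 1/4 with hg
  set K : ℝ := (1-4*f)^2 + 192*ψ1^2*g^2 + 4*ψ1^2 + 768*ψ1^4*g^2 + 48*ψ1^4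
        + 1024*ψ1^6*g^2 + 192*ψ1^6 + 256*ψ1^8 with hK
  have hfact : b3^2*b2^2*b1^2 - 4*b3^3*b1^3 - 4*b4*b2^3*b1^2 + 18*b4*b3*b2*b1^3
      - 27*b4^2*b1^4 - 4*b3^2*b2^3*b0 + 18*b3^3*b2*b1*b0 + 16*b4*b2^4*b0
      - 80*b4*b3*b2^2*b1*b0 - 6*b4*b3^2*b1^2*b0 + 144*b4^2*b2*b1^2*b0
      - 27*b3^4*b0^2 + 144*b4*b3^2*b2*b0^2 - 128*b4^2*b2^2*b0^2
      - 192*b4^2*b3*b1*b0^2 + 256*b4^3*b0^3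
      = -432 * ψ1^4 * (ψ1 + 2*ψ2)^4 * ψ2^2 * (ψ1+ψ2)^2 * K := by
    rw [hb4, hb3, hb2, hb1, hb0, hK, hg, hf]; ring
  rw [hfact]
  have hKpos : 0 < K := by
    have h4 : 0 < 4 * ψ1^2 := by positivity
    have hrest : 0 ≤ (1-4*f)^2 + 192*ψ1^2*g^2 + 768*ψ1^4*g^2 + 48*ψ1^4
        + 1024*ψ1^6*g^2 + 192*ψ1^6 + 256*ψ1^8 := by positivity
    rw [hK]; linarith
  have hB : 0 < ψ1^4 * (ψ1 + 2*ψ2)^4 * ψ2^2 * (ψ1+ψ2)^2 * K := by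
    have hne2 : ψ1 + 2*ψ2 ≠ 0 := fun h => h23 (by linarith)
    positivity
  nlinarith [hB]
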